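/- arXiv:1803.09804 — 2 statements merged into one kernel-verified Lean document; each statement's English description precedes it below -/
import Mathlib

section
/- Let R be the free noncommutative F-algebra on two generators X₁, X₂ over F = ℚ(A), with the endomorphisms T₁, T₁⁻, T₂, T₂⁻ and the two-sided ideal J as above. Then for k ∈ {1,2}, the element T₁T₂T₁(X_k) − T₂T₁T₂(X_k) belongs to J; that is, the braid relation T₁T₂T₁(X_k) = T₂T₁T₂(X_k) holds in the quotient algebra B = R/J. -/
/-- `F = ℚ(A)`, the field of rational functions in one variable over `ℚ`. -/
noncomputable abbrev F : Type := RatFunc ℚ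

/-- The variable `A ∈ ℚ(A)`. -/
noncomputable def A : F := RatFunc.X

/-- The deformed bracket `[x,y]_A = A·(x*y) − A⁻¹·(y*x)` in an `F`-algebra. -/
noncomputable def brA {S : Type*} [Ring S] [Algebra F S] (x y : S) : S :=
  A • (x * y) - A⁻¹ • (y * x)

/-- `R`, the free noncommutative `F`-algebra on two generators. -/
noncomputable abbrev R : Type := FreeAlgebra F (Fin 2)

/-- The first generator `X₁`. -/
noncomputable def X1 : R := FreeAlgebra.ι F 0

/-- The second generator `X₂`. -/
noncomputable def X2 : R := FreeAlgebra.ι F 1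

/-- The generators as a function on `Fin 2`. -/
noncomputable def X : Fin 2 → R := ![X1, X2]

/-- `T₁ : X₁ ↦ X₁, X₂ ↦ [X₁,X₂]_A`. -/
noncomputable def T1 : R →ₐ[F] R := FreeAlgebra.lift F ![X1, brA X1 X2]

/-- `T₁⁻ : X₁ ↦ X₁, X₂ ↦ [X₂,X₁]_A`. -/
noncomputable def T1inv : R →ₐ[F] R := FreeAlgebra.lift F ![X1, brA X2 X1]

/-- `T₂ : X₁ ↦ [X₂,X₁]_A, X₂ ↦ X₂`. -/
noncomputable def T2 : R →ₐ[F] R := FreeAlgebra.lift F ![brA X2 X1, X2]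

/-- `T₂⁻ : X₁ ↦ [X₁,X₂]_A, X₂ ↦ X₂`. -/
noncomputable def T2inv : R →ₐ[F] R := FreeAlgebra.lift F ![brA X1 X2, X2]

/-- The two-sided ideal `J` generated by `[[X₁,X₂]_A, X₁]_A − X₂` and
`[[X₂,X₁]_A, X₂]_A − X₁`. -/
noncomputable def J : TwoSidedIdeal R :=
  TwoSidedIdeal.span {brA (brA X1 X2) X1 - X2, brA (brA X2 X1) X2 - X1}


/-- A generic version of the deformed bracket over any commutative scalar ring. -/
def brGen {k S : Type*} [CommRing k] [Ring S] [Algebra k S] (a b : k) (x y : S) : S :=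
  a • (x * y) - b • (y * x)

lemma brA_eq_brGen {S : Type*} [Ring S] [Algebra F S] (x y : S) :
    brA x y = brGen A A⁻¹ x y := rfl

lemma braid_aux1 {k S : Type*} [CommRing k] [Ring S] [Algebra k S] (a b : k) (x y : S) :
    brGen a b (brGen a b x y) x
      - brGen a b (brGen a b (brGen a b y x) y) (brGen a b y x) =
    b • (brGen a b y x * (brGen a b (brGen a b y x) y - x))
      - a • ((brGen a b (brGen a b y x) y - x) * brGen a b y x) := by
  simp only [brGen, smul_sub, sub_mul, mul_sub, smul_mul_assoc, mul_smul_comm, smul_smul,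
    mul_assoc]
  module

lemma braid_aux2 {k S : Type*} [CommRing k] [Ring S] [Algebra k S] (a b : k) (x y : S) :
    brGen a b (brGen a b (brGen a b x y) x) (brGen a b x y)
      - brGen a b (brGen a b y x) y =
    a • ((brGen a b (brGen a b x y) x - y) * brGen a b x y)
      - b • (brGen a b x y * (brGen a b (brGen a b x y) x - y)) := by
  simp only [brGen, smul_sub, sub_mul, mul_sub, smul_mul_assoc, mul_smul_comm, smul_smul,
    mul_assoc]
  module

lemma g1_mem : brA (brA X1 X2) X1 - X2 ∈ J :=
  TwoSidedIdeal.subset_span (Set.mem_insert _ _)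

lemma g2_mem : brA (brA X2 X1) X2 - X1 ∈ J :=
  TwoSidedIdeal.subset_span (Set.mem_insert_of_mem _ rfl)

lemma smul_mem_J (a : F) {x : R} (hx : x ∈ J) : a • x ∈ J := by
  rw [Algebra.smul_def]
  exact J.mul_mem_left _ _ hx

/-- The braid relation `T₁T₂T₁(X_k) = T₂T₁T₂(X_k)` holds in the quotient `B = R/J`. -/
theorem braid_relation_mem (k : Fin 2) :
    T1 (T2 (T1 (X k))) - T2 (T1 (T2 (X k))) ∈ J := by
  have e1 : T1 X1 = X1 := by simp [T1, X1, FreeAlgebra.lift_ι_apply]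
  have e2 : T1 X2 = brA X1 X2 := by simp [T1, X1, X2, FreeAlgebra.lift_ι_apply]
  have e3 : T2 X1 = brA X2 X1 := by simp [T2, X1, X2, FreeAlgebra.lift_ι_apply]
  have e4 : T2 X2 = X2 := by simp [T2, X2, FreeAlgebra.lift_ι_apply]
  have b1 : ∀ x y : R, T1 (brA x y) = brA (T1 x) (T1 y) := by
    intro x y; simp [brA, map_sub, map_smul, map_mul]
  have b2 : ∀ x y : R, T2 (brA x y) = brA (T2 x) (T2 y) := by
    intro x y; simp [brA, map_sub, map_smul, map_mul]
  fin_cases k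
  · have : T1 (T2 (T1 X1)) - T2 (T1 (T2 X1)) =
        A⁻¹ • (brA X2 X1 * (brA (brA X2 X1) X2 - X1))
          - A • ((brA (brA X2 X1) X2 - X1) * brA X2 X1) := by
      rw [e1, e3, b1, e1, e2, b2, b2, e3, e4]
      simpa only [brA_eq_brGen] using braid_aux1 A A⁻¹ X1 X2
    show T1 (T2 (T1 X1)) - T2 (T1 (T2 X1)) ∈ J
    rw [this]
    exact J.sub_mem (smul_mem_J _ (J.mul_mem_left _ _ g2_mem))
      (smul_mem_J _ (J.mul_mem_right _ _ g2_mem))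
  · have : T1 (T2 (T1 X2)) - T2 (T1 (T2 X2)) =
        A • ((brA (brA X1 X2) X1 - X2) * brA X1 X2)
          - A⁻¹ • (brA X1 X2 * (brA (brA X1 X2) X1 - X2)) := by
      rw [e4, e2, b2, e3, e4, b1, b1, e1, e2]
      simpa only [brA_eq_brGen] using braid_aux2 A A⁻¹ X1 X2
    show T1 (T2 (T1 X2)) - T2 (T1 (T2 X2)) ∈ J
    rw [this]
    exact J.sub_mem (smul_mem_J _ (J.mul_mem_right _ _ g1_mem))
      (smul_mem_J _ (J.mul_mem_left _ _ g1_mem))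
end

section
/- Let R be the free noncommutative F-algebra on two generators X₁, X₂ over F = ℚ(A), with the endomorphisms T₁, T₁⁻, T₂, T₂⁻ and the two-sided ideal J as above. Then for k ∈ {1,2}, the elements T₁(T₁⁻(X_k)) − X_k, T₁⁻(T₁(X_k)) − X_k, T₂(T₂⁻(X_k)) − X_k and T₂⁻(T₂(X_k)) − X_k all belong to J; that is, on generators, T₁ and T₁⁻ (respectively T₂ and T₂⁻) are mutually inverse modulo J. -/
lemma brA_assoc {S : Type*} [Ring S] [Algebra F S] (x y : S) :
    brA x (brA y x) = brA (brA x y) x := by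
  have hA : A ≠ 0 := RatFunc.X_ne_zero
  simp only [brA, mul_sub, sub_mul, smul_sub, smul_smul, mul_smul_comm, smul_mul_assoc,
    mul_assoc, mul_inv_cancel₀ hA, inv_mul_cancel₀ hA, one_smul]
  abel

lemma map_brA (f : R →ₐ[F] R) (x y : R) : f (brA x y) = brA (f x) (f y) := by
  simp [brA]

lemma T1_X1 : T1 X1 = X1 := by simp [T1, X1, FreeAlgebra.lift_ι_apply]
lemma T1_X2 : T1 X2 = brA X1 X2 := by simp [T1, X2, FreeAlgebra.lift_ι_apply]
lemma T1inv_X1 : T1inv X1 = X1 := by simp [T1inv, X1, FreeAlgebra.lift_ι_apply]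
lemma T1inv_X2 : T1inv X2 = brA X2 X1 := by simp [T1inv, X2, FreeAlgebra.lift_ι_apply]
lemma T2_X1 : T2 X1 = brA X2 X1 := by simp [T2, X1, FreeAlgebra.lift_ι_apply]
lemma T2_X2 : T2 X2 = X2 := by simp [T2, X2, FreeAlgebra.lift_ι_apply]
lemma T2inv_X1 : T2inv X1 = brA X1 X2 := by simp [T2inv, X1, FreeAlgebra.lift_ι_apply]
lemma T2inv_X2 : T2inv X2 = X2 := by simp [T2inv, X2, FreeAlgebra.lift_ι_apply]

/-- On generators, `T₁` and `T₁⁻` (respectively `T₂` and `T₂⁻`) are mutually inverse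
modulo `J`. -/
theorem T_mutually_inverse_on_generators_mem (k : Fin 2) :
    T1 (T1inv (X k)) - X k ∈ J ∧ T1inv (T1 (X k)) - X k ∈ J ∧
    T2 (T2inv (X k)) - X k ∈ J ∧ T2inv (T2 (X k)) - X k ∈ J := by
  have hg1 : brA (brA X1 X2) X1 - X2 ∈ J :=
    TwoSidedIdeal.subset_span (Set.mem_insert _ _)
  have hg2 : brA (brA X2 X1) X2 - X1 ∈ J :=
    TwoSidedIdeal.subset_span (Set.mem_insert_of_mem _ rfl)
  fin_cases k <;>
    simp only [X, Fin.mk_zero, Fin.mk_one, Fin.isValue, Matrix.cons_val_zero,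
      Matrix.cons_val_one, Matrix.head_cons,
      T1_X1, T1_X2, T1inv_X1, T1inv_X2, T2_X1, T2_X2, T2inv_X1, T2inv_X2, map_brA,
      brA_assoc, sub_self]
  · exact ⟨J.zero_mem, J.zero_mem, hg2, hg2⟩
  · exact ⟨hg1, hg1, J.zero_mem, J.zero_mem⟩
end
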